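/- Let (R,M) be a two-dimensional regular local ring with M = (x,y)R and let e > 1 be an integer. Then the ideal I = (x, y^e)R is integrally closed. -/

import Mathlib

open Finset in
/-- `r` is integral over the ideal `I`: it satisfies an equation of integral dependence
`r^n + c₁ r^{n-1} + ⋯ + c_n = 0` with `c_j ∈ I^j`. -/
def Ideal.IsIntegralElem {R : Type*} [CommRing R] (I : Ideal R) (r : R) : Prop :=
  ∃ n : ℕ, 0 < n ∧ ∃ c : ℕ → R, (∀ j ∈ Finset.Icc 1 n, c j ∈ I ^ j) ∧
    r ^ n + ∑ j ∈ Finset.Icc 1 n, c j * r ^ (n - j) = 0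

/-- The integral closure `I_a` of an ideal `I`, as a set. -/
def Ideal.intCl {R : Type*} [CommRing R] (I : Ideal R) : Set R :=
  {r | I.IsIntegralElem r}

/-- Two ideals are projectively equivalent if some powers have the same integral closure. -/
def Ideal.ProjEquiv {R : Type*} [CommRing R] (I J : Ideal R) : Prop :=
  ∃ m n : ℕ, 0 < m ∧ 0 < n ∧ (I ^ m).intCl = (J ^ n).intCl

section ArtinianAux

variable {R : Type*} [CommRing R] [IsNoetherianRing R] [IsLocalRing R]

open IsLocalRing

/-- Quotient by an ideal containing the maximal ideal is an Artinian module. -/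
lemma aux_artinian_of_max_le {I : Ideal R} (h : maximalIdeal R ≤ I) :
    IsArtinian R (R ⧸ I) := by
  have hfin : Finite {p' : Submodule R R // I ≤ p'} := by
    have hsub : {p' : Submodule R R | I ≤ p'} ⊆
        {(maximalIdeal R : Submodule R R), ⊤} := by
      intro J hJ
      rcases eq_or_ne (J : Ideal R) ⊤ with hT | hT
      · exact Or.inr hT
      · exact Or.inl ((maximalIdeal.isMaximal R).eq_of_le hT (le_trans h hJ)).symm
    exact (((Set.finite_singleton _).insert _).subset hsub).to_subtype
  rw [isArtinian_iff]
  exact ((Submodule.comapMkQRelIso I).toOrderEmbedding).wellFounded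
    (haveI : Finite (Set.Ici I) := hfin; Finite.to_wellFoundedLT).wf

/-- A finitely generated module killed by the maximal ideal is Artinian. -/
lemma aux_artinian_of_smul_bot {N : Type*} [AddCommGroup N] [Module R N]
    [Module.Finite R N]
    (h : ∀ m : R, m ∈ maximalIdeal R → ∀ v : N, m • v = 0) : IsArtinian R N := by
  classical
  obtain ⟨s, hs⟩ := Module.Finite.fg_top (R := R) (M := N)
  haveI : IsArtinian R (R ⧸ (maximalIdeal R : Ideal R)) := aux_artinian_of_max_le le_rfl
  let ψ : (i : s) → (R ⧸ (maximalIdeal R : Ideal R)) →ₗ[R] N := fun i =>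
    Submodule.liftQ _ (LinearMap.toSpanSingleton R N i) (by
      intro m hm
      simp only [LinearMap.mem_ker, LinearMap.toSpanSingleton_apply]
      exact h m hm i)
  let φ := LinearMap.lsum R (fun _ : s => R ⧸ (maximalIdeal R : Ideal R)) ℕ ψ
  have hφ : Function.Surjective φ := by
    rw [← LinearMap.range_eq_top, eq_top_iff, ← hs, Submodule.span_le]
    intro v hv
    refine ⟨Pi.single ⟨v, hv⟩ (Submodule.Quotient.mk 1), ?_⟩
    simp only [φ, LinearMap.lsum_apply, LinearMap.coe_sum, Finset.sum_apply,
      LinearMap.coe_comp, Function.comp_apply, LinearMap.proj_apply]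
    rw [Finset.sum_eq_single (⟨v, hv⟩ : s)]
    · simp only [ψ, Pi.single_eq_same]
      rw [Submodule.liftQ_apply]
      simp
    · intro b _ hb
      simp [Pi.single_eq_of_ne hb]
    · intro hmem
      exact absurd (Finset.mem_univ _) hmem
  exact isArtinian_of_surjective _ φ hφ

lemma aux_artinian_pow (k : ℕ) :
    IsArtinian R (R ⧸ (maximalIdeal R ^ k : Ideal R)) := by
  induction k with
  | zero =>
      have hsub : Subsingleton (R ⧸ (maximalIdeal R ^ 0 : Ideal R)) := by
        rw [pow_zero, Ideal.one_eq_top]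
        exact Submodule.Quotient.subsingleton_iff.mpr rfl
      have : Finite (R ⧸ (maximalIdeal R ^ 0 : Ideal R)) := Finite.of_subsingleton
      exact isArtinian_of_finite
  | succ k ih =>
      set Mk1 : Ideal R := maximalIdeal R ^ (k + 1) with hMk1
      have hle : Mk1 ≤ (maximalIdeal R ^ k : Ideal R) :=
        Ideal.pow_le_pow_right (Nat.le_succ k)
      set N : Submodule R (R ⧸ Mk1) :=
        Submodule.map Mk1.mkQ (maximalIdeal R ^ k : Ideal R) with hN
      haveI h1 : IsArtinian R ((R ⧸ Mk1) ⧸ N) := by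
        haveI := ih
        exact isArtinian_of_linearEquiv
          (Submodule.quotientQuotientEquivQuotient Mk1 _ hle).symm
      haveI h2 : IsArtinian R N := by
        haveI : Module.Finite R N :=
          Module.Finite.iff_fg.mpr (IsNoetherian.noetherian N)
        apply aux_artinian_of_smul_bot
        intro m hm v
        obtain ⟨w, hw⟩ := v
        obtain ⟨a, ha, rfl⟩ := Submodule.mem_map.mp hw
        apply Subtype.ext
        show m • (Mk1.mkQ a) = 0
        rw [← map_smul, smul_eq_mul]
        rw [Submodule.mkQ_apply, Submodule.Quotient.mk_eq_zero]
        rw [hMk1, pow_succ']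
        exact Ideal.mul_mem_mul hm ha
      exact isArtinian_of_range_eq_ker N.subtype N.mkQ
        (by rw [Submodule.range_subtype, Submodule.ker_mkQ])

lemma aux_artinian_quot {J : Ideal R} {n : ℕ} (h : (maximalIdeal R) ^ n ≤ J) :
    IsArtinian R (R ⧸ J) := by
  haveI := aux_artinian_pow (R := R) n
  have hc : (maximalIdeal R ^ n : Ideal R) ≤
      Submodule.comap (LinearMap.id : R →ₗ[R] R) J := h
  apply isArtinian_of_surjective _ (Submodule.mapQ _ _ LinearMap.id hc)
  intro z
  obtain ⟨a, rfl⟩ := Submodule.Quotient.mk_surjective _ z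
  exact ⟨Submodule.Quotient.mk a, by rw [Submodule.mapQ_apply]; rfl⟩

end ArtinianAux

section PIT

variable {R : Type*} [CommRing R] [IsDomain R] [IsNoetherianRing R] [IsLocalRing R]

open IsLocalRing

/-- A special case of Krull's principal ideal theorem setup: if some power of the maximal
ideal is contained in `(x)`, there is no prime `p` with `x ∉ p` and `p ≠ ⊥`. -/
lemma aux_pit (x : R) (hx : x ∈ maximalIdeal R) {n : ℕ}
    (hMn : (maximalIdeal R) ^ n ≤ Ideal.span {x})
    (p : Ideal R) [hp : p.IsPrime] (hxp : x ∉ p) (hp0 : p ≠ ⊥) : False := by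
  classical
  set S := Localization.AtPrime p with hS
  set f := algebraMap R S with hf
  set Q : ℕ → Ideal R := fun k => ((p ^ k).map f).comap f with hQ
  have hQanti : ∀ {k m : ℕ}, k ≤ m → Q m ≤ Q k := fun {k m} h =>
    Ideal.comap_mono (Ideal.map_mono (Ideal.pow_le_pow_right h))
  have hsat : ∀ (k : ℕ) (c : R), x * c ∈ Q k → c ∈ Q k := by
    intro k c hc
    have hux : IsUnit (f x) := (IsLocalization.AtPrime.isUnit_to_map_iff S p x).mpr hxp
    have hmm : f x * f c ∈ (p ^ k).map f := by rw [← map_mul]; exact hc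
    exact (Ideal.unit_mul_mem_iff_mem _ hux).mp hmm
  haveI hart : IsArtinian R (R ⧸ (Ideal.span {x} : Ideal R)) := aux_artinian_quot hMn
  have gmono : ∀ {k m : ℕ}, k ≤ m →
      Submodule.map (Ideal.span {x} : Ideal R).mkQ (Q m ⊔ Ideal.span {x}) ≤
      Submodule.map (Ideal.span {x} : Ideal R).mkQ (Q k ⊔ Ideal.span {x}) :=
    fun {k m} h => Submodule.map_mono (sup_le_sup_right (hQanti h) _)
  let g : ℕ →o (Submodule R (R ⧸ (Ideal.span {x} : Ideal R)))ᵒᵈ :=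
    ⟨fun k => OrderDual.toDual
        (Submodule.map (Ideal.span {x} : Ideal R).mkQ (Q k ⊔ Ideal.span {x})),
     fun k m hkm => gmono hkm⟩
  obtain ⟨K, hK⟩ := IsArtinian.monotone_stabilizes g
  have hKK : g K = g (K + 1) := hK (K + 1) (Nat.le_succ K)
  have e1 : ∀ k : ℕ, Submodule.comap (Ideal.span {x} : Ideal R).mkQ
      (Submodule.map (Ideal.span {x} : Ideal R).mkQ (Q k ⊔ Ideal.span {x})) =
      Q k ⊔ Ideal.span {x} := by
    intro k
    rw [Submodule.comap_map_mkQ, sup_comm, sup_assoc, sup_idem]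
  have hstab : Q K ⊔ Ideal.span {x} = Q (K + 1) ⊔ Ideal.span {x} := by
    rw [← e1 K, ← e1 (K + 1)]
    exact congrArg _ (congrArg OrderDual.ofDual hKK)
  have hle : Q K ≤ Q (K + 1) ⊔ (Ideal.span {x} : Ideal R) * Q K := by
    intro a ha
    have h2 : a ∈ Q (K + 1) ⊔ Ideal.span {x} := hstab ▸ Submodule.mem_sup_left ha
    rcases Submodule.mem_sup.mp h2 with ⟨b, hb, z, hz, hba⟩
    obtain ⟨cc, rfl⟩ := Ideal.mem_span_singleton'.mp hz
    have hzQ : cc * x ∈ Q K := by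
      have hsub : a - b ∈ Q K := Ideal.sub_mem _ ha (hQanti (Nat.le_succ K) hb)
      have : cc * x = a - b := by rw [← hba]; ring
      rwa [this]
    have hcc : cc ∈ Q K := hsat K cc (by rwa [mul_comm] at hzQ)
    have hmem : cc * x ∈ (Ideal.span {x} : Ideal R) * Q K := by
      rw [mul_comm cc x]
      exact Ideal.mul_mem_mul (Ideal.mem_span_singleton_self x) hcc
    rw [← hba]
    exact Submodule.add_mem _ (Ideal.mem_sup_left hb) (Ideal.mem_sup_right hmem)
  have hjac : (Ideal.span {x} : Ideal R) ≤ Ideal.jacobson ⊥ := by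
    rw [IsLocalRing.jacobson_eq_maximalIdeal ⊥ bot_ne_top]
    exact Ideal.span_le.mpr (Set.singleton_subset_iff.mpr hx)
  have hle' : Q K ≤ Q (K + 1) ⊔ (Ideal.span {x} : Ideal R) • Q K := by
    rwa [Ideal.smul_eq_mul]
  have hsupeq := Submodule.sup_eq_sup_smul_of_le_smul_of_le_jacobson
      (IsNoetherian.noetherian (Q K)) hjac hle'
  have hQKle : Q K ≤ Q (K + 1) := by
    have h3 : Q (K + 1) ⊔ Q K = Q (K + 1) := by
      rw [hsupeq, Submodule.bot_smul, sup_bot_eq]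
    exact sup_eq_left.mp h3
  have hQeq : Q K = Q (K + 1) := le_antisymm hQKle (hQanti (Nat.le_succ K))
  have e2 : ∀ k : ℕ, Ideal.map f (Q k) = (p.map f) ^ k := by
    intro k
    rw [hQ]
    dsimp only
    rw [(Ideal.gc_map_comap f).l_u_l_eq_l, Ideal.map_pow]
  have hmapeq : (p.map f) ^ K = (p.map f) ^ (K + 1) := by
    rw [← e2 K, ← e2 (K + 1), hQeq]
  haveI : IsNoetherianRing S := IsLocalization.isNoetherianRing p.primeCompl S inferInstance
  have hPjac : p.map f ≤ Ideal.jacobson (⊥ : Ideal S) := by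
    rw [IsLocalRing.jacobson_eq_maximalIdeal ⊥ bot_ne_top]
    exact le_of_eq Localization.AtPrime.map_eq_maximalIdeal
  have hbot : (p.map f) ^ (K + 1) = ⊥ := by
    apply Submodule.eq_bot_of_le_smul_of_le_jacobson_bot (p.map f) _
      (IsNoetherian.noetherian _) _ hPjac
    have : ((p.map f) ^ (K + 1) : Ideal S) = (p.map f) • ((p.map f) ^ (K + 1)) := by
      rw [Ideal.smul_eq_mul, ← hmapeq, ← pow_succ']
      exact hmapeq
    exact le_of_eq this
  obtain ⟨c, hcp, hc0⟩ : ∃ c, c ∈ p ∧ c ≠ 0 := by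
    by_contra hcon
    push_neg at hcon
    exact hp0 (eq_bot_iff.mpr fun c hc => (Submodule.mem_bot R).mpr (hcon c hc))
  have hfc : f (c ^ (K + 1)) = 0 := by
    have h4 : (f c) ^ (K + 1) ∈ (p.map f) ^ (K + 1) :=
      Ideal.pow_mem_pow (Ideal.mem_map_of_mem f hcp) _
    rw [hbot] at h4
    rw [map_pow]
    exact (Submodule.mem_bot S).mp h4
  obtain ⟨m, hm⟩ := (IsLocalization.map_eq_zero_iff p.primeCompl S _).mp hfc
  have hmne : (m : R) ≠ 0 := by
    intro h0
    have : (m : R) ∉ p := m.2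
    rw [h0] at this
    exact this p.zero_mem
  have hck : c ^ (K + 1) = 0 := by
    rcases mul_eq_zero.mp hm with h | h
    · exact absurd h hmne
    · exact h
  exact hc0 (pow_eq_zero_iff (Nat.succ_ne_zero K) |>.mp hck)

/-- In a 2-dimensional Noetherian local domain with maximal ideal `(x, y)`,
no power of `y` lies in `(x)`. -/
lemma aux_ypow_not_mem (x y : R)
    (hM : IsLocalRing.maximalIdeal R = Ideal.span {x, y})
    (hdim : ringKrullDim R = 2) : ∀ m : ℕ, y ^ m ∉ Ideal.span {x} := by
  intro m hmem
  have hxM : x ∈ maximalIdeal R := by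
    rw [hM]; exact Ideal.subset_span (Set.mem_insert _ _)
  have hyM : y ∈ maximalIdeal R := by
    rw [hM]; exact Ideal.subset_span (Set.mem_insert_of_mem _ rfl)
  have hrad : maximalIdeal R ≤ (Ideal.span {x} : Ideal R).radical := by
    rw [hM, Ideal.span_le]
    rintro z (rfl | rfl)
    · exact Ideal.le_radical (Ideal.mem_span_singleton_self z)
    · exact ⟨m, hmem⟩
  obtain ⟨n, hMn⟩ := Ideal.exists_pow_le_of_le_radical_of_fg hrad (IsNoetherian.noetherian _)
  obtain ⟨q, hq⟩ : ∃ q : LTSeries (PrimeSpectrum R), 2 ≤ q.length := by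
    by_contra hcon
    push_neg at hcon
    have h1 : ringKrullDim R ≤ 1 := by
      rw [ringKrullDim, Order.krullDim_eq_iSup_length]
      have hsup : (⨆ q : LTSeries (PrimeSpectrum R), (q.length : ℕ∞)) ≤ 1 :=
        iSup_le fun q => by exact_mod_cast Nat.lt_succ_iff.mp (hcon q)
      rw [show ((1 : WithBot ℕ∞)) = ((1 : ℕ∞) : WithBot ℕ∞) from rfl, WithBot.coe_le_coe]
      exact hsup
    rw [hdim] at h1
    norm_num at h1
  have h01 : q ⟨0, by omega⟩ < q ⟨1, by omega⟩ :=
    q.strictMono (Fin.mk_lt_mk.mpr (by omega))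
  have h12 : q ⟨1, by omega⟩ < q ⟨2, by omega⟩ :=
    q.strictMono (Fin.mk_lt_mk.mpr (by omega))
  set p : Ideal R := (q ⟨1, by omega⟩).asIdeal with hpdef
  haveI hpP : p.IsPrime := (q ⟨1, by omega⟩).isPrime
  have hlt12 : p < (q ⟨2, by omega⟩).asIdeal := h12
  have hlt01 : (q ⟨0, by omega⟩).asIdeal < p := h01
  have hxp : x ∉ p := by
    intro hxp
    have hyspan : Ideal.span {x} ≤ p := Ideal.span_le.mpr (Set.singleton_subset_iff.mpr hxp)
    have hyp : y ∈ p := hpP.mem_of_pow_mem m (hyspan hmem)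
    have hMp : maximalIdeal R ≤ p := by
      rw [hM, Ideal.span_le]
      rintro z (rfl | rfl)
      · exact hxp
      · exact hyp
    have h2M : (q ⟨2, by omega⟩).asIdeal ≤ maximalIdeal R :=
      IsLocalRing.le_maximalIdeal (q ⟨2, by omega⟩).isPrime.ne_top
    exact absurd (lt_of_lt_of_le hlt12 (le_trans h2M hMp)) (lt_irrefl p)
  have hp0 : p ≠ ⊥ := by
    intro hb
    rw [hb] at hlt01
    exact not_lt_bot hlt01
  exact aux_pit x hxM hMn p hxp hp0

end PIT

section OrderFn

variable {R : Type*} [CommRing R] [IsLocalRing R]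

lemma aux_Smul (x y : R) (a b : ℕ) :
    Ideal.span {x, y ^ a} * Ideal.span {x, y ^ b} ≤ Ideal.span {x, y ^ (a + b)} := by
  rw [Ideal.mul_le]
  intro r hr s hs
  obtain ⟨c, d, hcd⟩ := Ideal.mem_span_pair.mp hr
  obtain ⟨c', d', hcd'⟩ := Ideal.mem_span_pair.mp hs
  apply Ideal.mem_span_pair.mpr
  refine ⟨c * c' * x + c * d' * y ^ b + d * y ^ a * c', d * d', ?_⟩
  rw [← hcd, ← hcd']
  ring

lemma aux_Santi (x y : R) {a b : ℕ} (h : a ≤ b) :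
    Ideal.span {x, y ^ b} ≤ Ideal.span {x, y ^ a} := by
  rw [Ideal.span_le]
  rintro z (rfl | rfl)
  · exact Ideal.subset_span (Set.mem_insert _ _)
  · obtain ⟨t, rfl⟩ := Nat.exists_eq_add_of_le h
    rw [pow_add]
    exact Ideal.mul_mem_right _ _ (Ideal.subset_span (Set.mem_insert_of_mem _ rfl))

lemma aux_Stop (x y : R) : Ideal.span {x, y ^ 0} = ⊤ := by
  rw [Ideal.eq_top_iff_one]
  exact Ideal.subset_span (by rw [pow_zero]; exact Set.mem_insert_of_mem _ rfl)

lemma aux_Spow (x y : R) (a : ℕ) :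
    ∀ j : ℕ, (Ideal.span {x, y ^ a}) ^ j ≤ Ideal.span {x, y ^ (j * a)} := by
  intro j
  induction j with
  | zero =>
      rw [pow_zero, Ideal.one_eq_top, Nat.zero_mul, aux_Stop]
  | succ j ih =>
      rw [pow_succ, Nat.succ_mul]
      exact le_trans (Ideal.mul_mono ih le_rfl) (aux_Smul x y (j * a) a)

lemma aux_key (x y : R) (hM : IsLocalRing.maximalIdeal R = Ideal.span {x, y})
    (hy : ∀ m : ℕ, y ^ m ∉ Ideal.span {x})
    {a b : R} {k l : ℕ}
    (hak : a ∈ Ideal.span {x, y ^ k}) (hak1 : a ∉ Ideal.span {x, y ^ (k + 1)})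
    (hbl : b ∈ Ideal.span {x, y ^ l}) (hbl1 : b ∉ Ideal.span {x, y ^ (l + 1)}) :
    a * b ∉ Ideal.span {x, y ^ (k + l + 1)} := by
  have decomp : ∀ (a : R) (k : ℕ), a ∈ Ideal.span {x, y ^ k} →
      a ∉ Ideal.span {x, y ^ (k + 1)} →
      ∃ c u : R, IsUnit u ∧ c * x + u * y ^ k = a := by
    intro a k h1 h2
    obtain ⟨c, d, hcd⟩ := Ideal.mem_span_pair.mp h1
    refine ⟨c, d, ?_, hcd⟩
    by_contra hdu
    have hdM : d ∈ IsLocalRing.maximalIdeal R := (IsLocalRing.mem_maximalIdeal d).mpr hdu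
    rw [hM] at hdM
    obtain ⟨α, β, hab⟩ := Ideal.mem_span_pair.mp hdM
    apply h2
    apply Ideal.mem_span_pair.mpr
    refine ⟨c + α * y ^ k, β, ?_⟩
    rw [← hcd, ← hab]
    ring
  obtain ⟨c, u, hu, hcu⟩ := decomp a k hak hak1
  obtain ⟨c', u', hu', hcu'⟩ := decomp b l hbl hbl1
  intro habmem
  have hxmem : x ∈ Ideal.span {x, y ^ (k + l + 1)} := Ideal.subset_span (Set.mem_insert _ _)
  have h1 : (u * u') * y ^ (k + l) ∈ Ideal.span {x, y ^ (k + l + 1)} := by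
    have heq : a * b - (c * c' * x + c * u' * y ^ l + u * y ^ k * c') * x
        = (u * u') * y ^ (k + l) := by
      rw [← hcu, ← hcu']
      ring
    rw [← heq]
    exact Ideal.sub_mem _ habmem (Ideal.mul_mem_left _ _ hxmem)
  have h2 : y ^ (k + l) ∈ Ideal.span {x, y ^ (k + l + 1)} :=
    (Ideal.unit_mul_mem_iff_mem _ (hu.mul hu')).mp h1
  obtain ⟨α, β, hab2⟩ := Ideal.mem_span_pair.mp h2
  have h3 : y ^ (k + l) * (1 - β * y) = α * x := by
    linear_combination -hab2
  have hβy : β * y ∈ IsLocalRing.maximalIdeal R := by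
    rw [hM]
    exact Ideal.mul_mem_left _ β (Ideal.subset_span (Set.mem_insert_of_mem _ rfl))
  have hunit : IsUnit (1 - β * y) :=
    IsLocalRing.isUnit_one_sub_self_of_mem_nonunits _ hβy
  apply hy (k + l)
  have h4 : y ^ (k + l) * (1 - β * y) ∈ Ideal.span {x} := by
    rw [h3]
    exact Ideal.mem_span_singleton'.mpr ⟨α, rfl⟩
  rw [mul_comm] at h4
  exact (Ideal.unit_mul_mem_iff_mem _ hunit).mp h4

lemma aux_pow_strict (x y : R) (hM : IsLocalRing.maximalIdeal R = Ideal.span {x, y})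
    (hy : ∀ m : ℕ, y ^ m ∉ Ideal.span {x})
    {r : R} {k : ℕ} (h1 : r ∈ Ideal.span {x, y ^ k}) (h2 : r ∉ Ideal.span {x, y ^ (k + 1)}) :
    ∀ i : ℕ, 1 ≤ i → r ^ i ∈ Ideal.span {x, y ^ (i * k)} ∧
      r ^ i ∉ Ideal.span {x, y ^ (i * k + 1)} := by
  intro i hi
  induction i with
  | zero => omega
  | succ i ih =>
      rcases Nat.eq_or_lt_of_le hi with hi1 | hi2
      · constructor
        · rw [← hi1, pow_one, Nat.one_mul]; exact h1
        · rw [← hi1, pow_one, Nat.one_mul]; exact h2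
      · have hi' : 1 ≤ i := by omega
        obtain ⟨ihm, ihs⟩ := ih hi'
        constructor
        · have : r ^ (i + 1) = r ^ i * r := by ring
          rw [this, Nat.succ_mul]
          exact aux_Smul x y (i * k) k (Ideal.mul_mem_mul ihm h1)
        · have heq : r ^ (i + 1) = r ^ i * r := by ring
          rw [heq, Nat.succ_mul]
          exact aux_key x y hM hy ihm ihs h1 h2

end OrderFn

theorem example_integrally_closed {R : Type*} [CommRing R] [IsDomain R]
    [IsNoetherianRing R] [IsLocalRing R] (x y : R)
    (hM : IsLocalRing.maximalIdeal R = Ideal.span {x, y})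
    (hdim : ringKrullDim R = 2)
    (e : ℕ) (he : 1 < e) :
    (Ideal.span {x, y ^ e} : Ideal R).intCl = (Ideal.span {x, y ^ e} : Set R) := by
  classical
  have hy : ∀ m : ℕ, y ^ m ∉ Ideal.span {x} := aux_ypow_not_mem x y hM hdim
  ext r
  simp only [Ideal.intCl, Ideal.IsIntegralElem, Set.mem_setOf_eq, SetLike.mem_coe]
  constructor
  · rintro ⟨n, hn, c, hc, heq⟩
    by_contra hre
    -- maximal k ≤ e with r ∈ span {x, y^k}
    set P : ℕ → Prop := fun k => r ∈ Ideal.span {x, y ^ k} with hP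
    have hP0 : P 0 := by
      rw [hP]
      simp only [aux_Stop x y]
      exact Submodule.mem_top
    set k : ℕ := Nat.findGreatest P e with hk
    have hk1 : P k := Nat.findGreatest_spec (Nat.zero_le e) hP0
    have hke : k ≤ e := Nat.findGreatest_le e
    have hkne : k ≠ e := by
      intro hkeq
      apply hre
      rw [← hkeq]
      exact hk1
    have hklt : k < e := lt_of_le_of_ne hke hkne
    have hk2 : ¬ P (k + 1) :=
      Nat.findGreatest_is_greatest (Nat.lt_succ_self _) (by omega)
    have hrk : r ∈ Ideal.span {x, y ^ k} := hk1
    have hrk1 : r ∉ Ideal.span {x, y ^ (k + 1)} := hk2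
    obtain ⟨hrn, hrns⟩ := aux_pow_strict x y hM hy hrk hrk1 n hn
    -- the sum lies in span {x, y^(n*k+1)}
    have hsum : ∑ j ∈ Finset.Icc 1 n, c j * r ^ (n - j) ∈
        Ideal.span {x, y ^ (n * k + 1)} := by
      apply Ideal.sum_mem
      intro j hj
      obtain ⟨hj1, hjn⟩ := Finset.mem_Icc.mp hj
      have hcj : c j ∈ Ideal.span {x, y ^ (j * e)} := aux_Spow x y e j (hc j hj)
      have hrj : r ^ (n - j) ∈ Ideal.span {x, y ^ ((n - j) * k)} := by
        rcases Nat.eq_zero_or_pos (n - j) with h0 | hpos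
        · rw [h0, pow_zero, Nat.zero_mul]
          rw [aux_Stop x y]
          exact Submodule.mem_top
        · exact (aux_pow_strict x y hM hy hrk hrk1 (n - j) hpos).1
      have hprod : c j * r ^ (n - j) ∈ Ideal.span {x, y ^ (j * e + (n - j) * k)} :=
        aux_Smul x y (j * e) ((n - j) * k) (Ideal.mul_mem_mul hcj hrj)
      have harith : n * k + 1 ≤ j * e + (n - j) * k := by
        have e1 : j * k + (n - j) * k = n * k := by
          rw [← Nat.add_mul, Nat.add_sub_cancel' hjn]
        have e2 : j * (k + 1) ≤ j * e := Nat.mul_le_mul_left j hklt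
        have e3 : j * (k + 1) = j * k + j := by ring
        omega
      exact aux_Santi x y harith hprod
    have hrnmem : r ^ n ∈ Ideal.span {x, y ^ (n * k + 1)} := by
      have : r ^ n = -(∑ j ∈ Finset.Icc 1 n, c j * r ^ (n - j)) :=
        eq_neg_of_add_eq_zero_left heq
      rw [this]
      exact Submodule.neg_mem _ hsum
    exact hrns hrnmem
  · intro hr
    refine ⟨1, Nat.one_pos, fun _ => -r, ?_, ?_⟩
    · intro j hj
      obtain ⟨hj1, hj2⟩ := Finset.mem_Icc.mp hj
      have : j = 1 := by omega
      rw [this, pow_one]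
      exact Submodule.neg_mem _ hr
    · rw [Finset.Icc_self, Finset.sum_singleton]
      ring
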